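/- If σ is a causal strategy on an arena A and m1, m2 are two negative events of σ in minimal conflict, then their displays ∂(m1) and ∂(m2) are in minimal conflict in A. -/

import Mathlib

set_option autoImplicit false

/-- Immediate causality `a ⋗ b` for a relation `le`. -/
def immOf {α : Type} (le : α → α → Prop) (a b : α) : Prop :=
  le a b ∧ a ≠ b ∧ ∀ c, le a c → le c b → c = a ∨ c = b

/-- Configurations: finite, down-closed, consistent sets. -/
def ConfigOf {α : Type} (le conflict : α → α → Prop) (x : Set α) : Prop :=
  x.Finite ∧ (∀ e ∈ x, ∀ e', le e' e → e' ∈ x) ∧ ∀ e ∈ x, ∀ e' ∈ x, ¬ conflict e e'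

/-- Minimality for a causal dependency relation. -/
def MinimalOf {α : Type} (le : α → α → Prop) (a : α) : Prop := ∀ a', le a' a → a' = a

/-- An arena: an event structure with polarities (`true` = Player `+`,
`false` = Opponent `−`) which is alternating, forestial and race-free. -/
structure Arena (α : Type) where
  le : α → α → Prop
  conflict : α → α → Prop
  pol : α → Bool
  le_refl : ∀ e, le e e
  le_trans : ∀ {a b c : α}, le a b → le b c → le a c
  le_antisymm : ∀ {a b : α}, le a b → le b a → a = b
  finite_causes : ∀ e : α, Set.Finite {e' | le e' e}
  conflict_irrefl : ∀ e, ¬ conflict e e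
  conflict_symm : ∀ {a b : α}, conflict a b → conflict b a
  conflict_inherit : ∀ {a b b' : α}, conflict a b → le b b' → conflict a b'
  alternating : ∀ {a b : α}, immOf le a b → pol a ≠ pol b
  forestial : ∀ {a1 a2 a : α}, le a1 a → le a2 a → le a1 a2 ∨ le a2 a1
  race_free : ∀ {a1 a2 : α}, conflict a1 a2 →
    (∀ a1' a2', le a1' a1 → le a2' a2 → conflict a1' a2' → a1' = a1 ∧ a2' = a2) →
    pol a1 = pol a2

/-- A causal strategy on an arena `A`: an event structure of strategy events with a
display map `dsp` to the arena which is a map of event structures (preserves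
configurations, locally injective), is negative (minimal events display to
negative moves), courteous (immediate causal links with positive source or
negative target are sent to immediate causal links of `A`), and receptive (every
negative extension of the display of a configuration is witnessed by a unique
extension of the configuration). Polarities of strategy events are inherited
through `dsp`. -/
structure CausalStrategy {α : Type} (A : Arena α) (β : Type) where
  le : β → β → Prop
  conflict : β → β → Prop
  le_refl : ∀ e, le e e
  le_trans : ∀ {a b c : β}, le a b → le b c → le a c
  le_antisymm : ∀ {a b : β}, le a b → le b a → a = b
  finite_causes : ∀ e : β, Set.Finite {e' | le e' e}
  conflict_irrefl : ∀ e, ¬ conflict e e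
  conflict_symm : ∀ {a b : β}, conflict a b → conflict b a
  conflict_inherit : ∀ {a b b' : β}, conflict a b → le b b' → conflict a b'
  dsp : β → α
  dsp_config : ∀ x : Set β, ConfigOf le conflict x → ConfigOf A.le A.conflict (dsp '' x)
  dsp_locInj : ∀ x : Set β, ConfigOf le conflict x →
      ∀ e1 ∈ x, ∀ e2 ∈ x, dsp e1 = dsp e2 → e1 = e2
  negative : ∀ m : β, MinimalOf le m → A.pol (dsp m) = false
  courteous : ∀ m n : β, immOf le m n →
      (A.pol (dsp m) = true ∨ A.pol (dsp n) = false) → immOf A.le (dsp m) (dsp n)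
  receptive : ∀ x : Set β, ConfigOf le conflict x → ∀ a : α, A.pol a = false →
      a ∉ dsp '' x → ConfigOf A.le A.conflict (insert a (dsp '' x)) →
      ∃! m : β, m ∉ x ∧ ConfigOf le conflict (insert m x) ∧ dsp m = a

/-- A minimal conflict: a conflicting pair not inherited from a conflict between
causal predecessors. -/
def MinConflictOf {γ : Type} (le conflict : γ → γ → Prop) (a b : γ) : Prop :=
  conflict a b ∧ ∀ a' b', le a' a → le b' b → conflict a' b' → a' = a ∧ b' = b

/-- If `σ` is a causal strategy on an arena `A` and `m1, m2` are negative events of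
`σ` in minimal conflict, then their displays `∂(m1)` and `∂(m2)` are in minimal
conflict in `A`. -/

private lemma exists_imm_pred {β : Type} (le : β → β → Prop)
    (le_refl : ∀ e, le e e)
    (le_trans : ∀ {a b c : β}, le a b → le b c → le a c)
    (le_antisymm : ∀ {a b : β}, le a b → le b a → a = b)
    (fin : ∀ e : β, Set.Finite {e' | le e' e})
    (m n0 : β) (h0 : le n0 m) (hne : n0 ≠ m) :
    ∃ n, le n0 n ∧ immOf le n m := by
  classical
  set T : Set β := {c | le n0 c ∧ le c m ∧ c ≠ m} with hT
  have hTfin : T.Finite := (fin m).subset (fun c hc => hc.2.1)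
  have hTne : T.Nonempty := ⟨n0, le_refl n0, h0, hne⟩
  obtain ⟨n, hnT, hmax⟩ :=
    Set.Finite.exists_maximalFor (fun c => ((fin c).toFinset).card) T hTfin hTne
  refine ⟨n, hnT.1, hnT.2.1, hnT.2.2, ?_⟩
  intro c hnc hcm
  by_contra hcon
  push_neg at hcon
  obtain ⟨hcn, hcm'⟩ := hcon
  have hcT : c ∈ T := ⟨le_trans hnT.1 hnc, hcm, hcm'⟩
  have hsubF : (fin n).toFinset ⊆ (fin c).toFinset := by
    intro e he
    simp only [Set.Finite.mem_toFinset, Set.mem_setOf_eq] at *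
    exact le_trans he hnc
  have hcmem : c ∈ (fin c).toFinset := by
    simp only [Set.Finite.mem_toFinset, Set.mem_setOf_eq]
    exact le_refl c
  have hcnot : c ∉ (fin n).toFinset := by
    simp only [Set.Finite.mem_toFinset, Set.mem_setOf_eq]
    intro h
    exact hcn (le_antisymm h hnc)
  have hss : (fin n).toFinset ⊂ (fin c).toFinset := by
    rw [Finset.ssubset_def]
    exact ⟨hsubF, fun h => hcnot (h hcmem)⟩
  have hlt := Finset.card_lt_card hss
  have : (fin c).toFinset.card ≤ (fin n).toFinset.card := hmax hcT (le_of_lt hlt)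
  omega

theorem negative_minimal_conflict_displays {α β : Type} (A : Arena α)
    (S : CausalStrategy A β) (m1 m2 : β)
    (h1 : A.pol (S.dsp m1) = false) (h2 : A.pol (S.dsp m2) = false)
    (hmc : MinConflictOf S.le S.conflict m1 m2) :
    MinConflictOf A.le A.conflict (S.dsp m1) (S.dsp m2) := by
  classical
  obtain ⟨hc12, hmin⟩ := hmc
  have hne12 : m1 ≠ m2 := fun h => S.conflict_irrefl m2 (h ▸ hc12)
  set x : Set β := {e | S.le e m1 ∧ e ≠ m1} ∪ {e | S.le e m2 ∧ e ≠ m2} with hxdef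
  have hm1x : m1 ∉ x := by
    rintro (⟨h, hne⟩ | ⟨h, hne⟩)
    · exact hne rfl
    · exact S.conflict_irrefl m2 (S.conflict_inherit (S.conflict_symm hc12) h)
  have hm2x : m2 ∉ x := by
    rintro (⟨h, hne⟩ | ⟨h, hne⟩)
    · exact S.conflict_irrefl m1 (S.conflict_inherit hc12 h)
    · exact hne rfl
  have hxdc : ∀ e ∈ x, ∀ e', S.le e' e → e' ∈ x := by
    rintro e (⟨h, hne⟩ | ⟨h, hne⟩) e' hle
    · exact Or.inl ⟨S.le_trans hle h, fun heq => hne (S.le_antisymm h (heq ▸ hle))⟩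
    · exact Or.inr ⟨S.le_trans hle h, fun heq => hne (S.le_antisymm h (heq ▸ hle))⟩
  have hsame1 : ∀ e e', S.le e m1 → S.le e' m1 → S.conflict e e' → False := fun e e' h h' hc =>
    S.conflict_irrefl m1 (S.conflict_inherit (S.conflict_symm (S.conflict_inherit hc h')) h)
  have hsame2 : ∀ e e', S.le e m2 → S.le e' m2 → S.conflict e e' → False := fun e e' h h' hc =>
    S.conflict_irrefl m2 (S.conflict_inherit (S.conflict_symm (S.conflict_inherit hc h')) h)
  have hxcons : ∀ e ∈ x, ∀ e' ∈ x, ¬ S.conflict e e' := by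
    rintro e (⟨h, hne⟩ | ⟨h, hne⟩) e' (⟨h', hne'⟩ | ⟨h', hne'⟩) hc
    · exact hsame1 e e' h h' hc
    · exact hne (hmin e e' h h' hc).1
    · exact hne' (hmin e' e h' h (S.conflict_symm hc)).1
    · exact hsame2 e e' h h' hc
  have hxfin : x.Finite := ((S.finite_causes m1).union (S.finite_causes m2)).subset
    (by rintro e (⟨h, _⟩ | ⟨h, _⟩); exacts [Or.inl h, Or.inr h])
  have hx : ConfigOf S.le S.conflict x := ⟨hxfin, hxdc, hxcons⟩
  have hx1 : ConfigOf S.le S.conflict (insert m1 x) := by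
    refine ⟨hxfin.insert m1, ?_, ?_⟩
    · intro e he e' hle
      rcases he with heq | he
      · subst heq
        by_cases heq' : e' = e
        · exact Or.inl heq'
        · exact Or.inr (Or.inl ⟨hle, heq'⟩)
      · exact Or.inr (hxdc e he e' hle)
    · have key : ∀ e ∈ x, ¬ S.conflict m1 e := by
        rintro e (⟨h, hne⟩ | ⟨h, hne⟩) hc
        · exact S.conflict_irrefl m1 (S.conflict_inherit hc h)
        · exact hne (hmin m1 e (S.le_refl m1) h hc).2
      intro e he e' he' hc
      rcases he with heq | he <;> rcases he' with heq' | he'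
      · subst heq; subst heq'; exact S.conflict_irrefl _ hc
      · subst heq; exact key e' he' hc
      · subst heq'; exact key e he (S.conflict_symm hc)
      · exact hxcons e he e' he' hc
  have hx2 : ConfigOf S.le S.conflict (insert m2 x) := by
    refine ⟨hxfin.insert m2, ?_, ?_⟩
    · intro e he e' hle
      rcases he with heq | he
      · subst heq
        by_cases heq' : e' = e
        · exact Or.inl heq'
        · exact Or.inr (Or.inr ⟨hle, heq'⟩)
      · exact Or.inr (hxdc e he e' hle)
    · have key : ∀ e ∈ x, ¬ S.conflict m2 e := by
        rintro e (⟨h, hne⟩ | ⟨h, hne⟩) hc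
        · exact hne (hmin e m2 h (S.le_refl m2) (S.conflict_symm hc)).1
        · exact S.conflict_irrefl m2 (S.conflict_inherit hc h)
      intro e he e' he' hc
      rcases he with heq | he <;> rcases he' with heq' | he'
      · subst heq; subst heq'; exact S.conflict_irrefl _ hc
      · subst heq; exact key e' he' hc
      · subst heq'; exact key e he (S.conflict_symm hc)
      · exact hxcons e he e' he' hc
  have hy := S.dsp_config x hx
  have hy1 := S.dsp_config _ hx1
  have hy2 := S.dsp_config _ hx2
  rw [Set.image_insert_eq] at hy1 hy2
  have hDm1y : S.dsp m1 ∉ S.dsp '' x := by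
    rintro ⟨e, he, heq⟩
    have h := S.dsp_locInj _ hx1 m1 (Set.mem_insert _ _) e (Set.mem_insert_of_mem _ he) heq.symm
    rw [← h] at he
    exact hm1x he
  have hDm2y : S.dsp m2 ∉ S.dsp '' x := by
    rintro ⟨e, he, heq⟩
    have h := S.dsp_locInj _ hx2 m2 (Set.mem_insert _ _) e (Set.mem_insert_of_mem _ he) heq.symm
    rw [← h] at he
    exact hm2x he
  have hDne : S.dsp m1 ≠ S.dsp m2 := by
    intro heq
    obtain ⟨m, hm, huniq⟩ := S.receptive x hx (S.dsp m1) h1 hDm1y hy1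
    have e1 : m1 = m := huniq m1 ⟨hm1x, hx1, rfl⟩
    have e2 : m2 = m := huniq m2 ⟨hm2x, hx2, heq.symm⟩
    exact hne12 (e1.trans e2.symm)
  have hconf : A.conflict (S.dsp m1) (S.dsp m2) := by
    by_contra hnc
    have hbig : ConfigOf A.le A.conflict
        (insert (S.dsp m2) (insert (S.dsp m1) (S.dsp '' x))) := by
      refine ⟨(hy1.1.insert _), ?_, ?_⟩
      · intro e he e' hle
        rcases he with heq | he
        · subst heq
          have h' : e' ∈ insert (S.dsp m2) (S.dsp '' x) :=
            hy2.2.1 _ (Set.mem_insert _ _) e' hle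
          rcases h' with heq' | he'
          · exact Or.inl heq'
          · exact Or.inr (Or.inr he')
        · exact Or.inr (hy1.2.1 e he e' hle)
      · intro e he e' he' hcc
        rcases he with heq | he
        · subst heq
          rcases he' with heq' | he'
          · subst heq'; exact A.conflict_irrefl _ hcc
          · rcases he' with heq' | he'
            · subst heq'; exact hnc (A.conflict_symm hcc)
            · exact hy2.2.2 _ (Set.mem_insert _ _) e' (Set.mem_insert_of_mem _ he') hcc
        · rcases he' with heq' | he'
          · subst heq'
            rcases he with heq | he
            · subst heq; exact hnc hcc
            · exact hy2.2.2 e (Set.mem_insert_of_mem _ he) _ (Set.mem_insert _ _) hcc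
          · exact hy1.2.2 e he e' he' hcc
    have hDm2y1 : S.dsp m2 ∉ insert (S.dsp m1) (S.dsp '' x) := by
      rintro (heq | he)
      · exact hDne heq.symm
      · exact hDm2y he
    obtain ⟨m, ⟨hmx1, hmcfg, hmD⟩, _⟩ :=
      S.receptive _ hx1 (S.dsp m2) h2 (by rw [Set.image_insert_eq]; exact hDm2y1)
        (by rw [Set.image_insert_eq]; exact hbig)
    have hm1nem : m1 ≠ m := fun hh => hDne (by rw [hh, hmD])
    have hmne2 : m ≠ m2 := by
      intro heq
      rw [heq] at hmcfg
      exact hmcfg.2.2 m1 (Set.mem_insert_of_mem _ (Set.mem_insert _ _))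
        m2 (Set.mem_insert _ _) hc12
    have hm1nm : ¬ S.le m1 m := by
      intro hle
      obtain ⟨n, hm1n, hnimm⟩ := exists_imm_pred S.le S.le_refl S.le_trans S.le_antisymm
        S.finite_causes m m1 hle hm1nem
      have hDn : immOf A.le (S.dsp n) (S.dsp m) :=
        S.courteous n m hnimm (Or.inr (by rw [hmD]; exact h2))
      rw [hmD] at hDn
      by_cases hminS : MinimalOf S.le m2
      · have hcfg2 : ConfigOf S.le S.conflict {m2} :=
          ⟨Set.finite_singleton _,
           by
             intro e he e' hle'
             simp only [Set.mem_singleton_iff] at he ⊢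
             exact hminS e' (by rw [← he]; exact hle'),
           by
             intro e he e' he' hc
             simp only [Set.mem_singleton_iff] at he he'
             rw [he, he'] at hc
             exact S.conflict_irrefl m2 hc⟩
        have hcfg2' := S.dsp_config _ hcfg2
        rw [Set.image_singleton] at hcfg2'
        have hn2 : S.dsp n ∈ ({S.dsp m2} : Set α) := hcfg2'.2.1 _ rfl _ hDn.1
        exact hDn.2.1 hn2
      · simp only [MinimalOf, not_forall] at hminS
        obtain ⟨n0, hn0le, hn0ne⟩ := hminS
        obtain ⟨n2, _, hn2imm⟩ := exists_imm_pred S.le S.le_refl S.le_trans S.le_antisymm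
          S.finite_causes m2 n0 hn0le hn0ne
        have hDn2 : immOf A.le (S.dsp n2) (S.dsp m2) := S.courteous n2 m2 hn2imm (Or.inr h2)
        have hDeq : S.dsp n = S.dsp n2 := by
          rcases A.forestial hDn.1 hDn2.1 with h | h
          · rcases hDn.2.2 _ h hDn2.1 with h' | h'
            · exact h'.symm
            · exact absurd h' hDn2.2.1
          · rcases hDn2.2.2 _ h hDn.1 with h' | h'
            · exact h'
            · exact absurd h' hDn.2.1
        have hn2x : n2 ∈ x := Or.inr ⟨hn2imm.1, hn2imm.2.1⟩
        have hnx1 : n ∈ insert m1 x := by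
          have h' : n ∈ insert m (insert m1 x) := hmcfg.2.1 m (Set.mem_insert _ _) n hnimm.1
          rcases h' with heq | h'
          · exact absurd heq hnimm.2.1
          · exact h'
        have hnn2 : n = n2 := S.dsp_locInj _ hx1 n hnx1 n2 (Set.mem_insert_of_mem _ hn2x) hDeq
        rw [hnn2] at hm1n
        exact hm1x (hxdc n2 hn2x m1 hm1n)
    have hsub : insert m x ⊆ insert m (insert m1 x) := by
      rintro z (hz | hz)
      · exact Or.inl hz
      · exact Or.inr (Or.inr hz)
    have hmcfg' : ConfigOf S.le S.conflict (insert m x) := by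
      refine ⟨hxfin.insert m, ?_, ?_⟩
      · intro e he e' hle
        rcases he with heq | he
        · subst heq
          have h' : e' ∈ insert e (insert m1 x) := hmcfg.2.1 e (Set.mem_insert _ _) e' hle
          rcases h' with heq' | h'
          · exact Or.inl heq'
          · rcases h' with heq'' | h''
            · exfalso; subst heq''; exact hm1nm hle
            · exact Or.inr h''
        · exact Or.inr (hxdc e he e' hle)
      · intro e he e' he' hcc
        exact hmcfg.2.2 e (hsub he) e' (hsub he') hcc
    have hmnx : m ∉ x := fun h => hmx1 (Set.mem_insert_of_mem _ h)
    obtain ⟨m', _, huniq⟩ := S.receptive x hx (S.dsp m2) h2 hDm2y hy2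
    have e1 : m = m' := huniq m ⟨hmnx, hmcfg', hmD⟩
    have e2 : m2 = m' := huniq m2 ⟨hm2x, hx2, rfl⟩
    exact hmne2 (e1.trans e2.symm)
  refine ⟨hconf, ?_⟩
  intro a' b' ha' hb' hab
  have ha'mem : a' ∈ insert (S.dsp m1) (S.dsp '' x) := hy1.2.1 _ (Set.mem_insert _ _) a' ha'
  have hb'mem : b' ∈ insert (S.dsp m2) (S.dsp '' x) := hy2.2.1 _ (Set.mem_insert _ _) b' hb'
  rcases ha'mem with ha | ha <;> rcases hb'mem with hb | hb
  · exact ⟨ha, hb⟩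
  · exact absurd hab (hy1.2.2 a' (by rw [ha]; exact Set.mem_insert _ _) b'
      (Set.mem_insert_of_mem _ hb))
  · exact absurd hab (hy2.2.2 a' (Set.mem_insert_of_mem _ ha) b'
      (by rw [hb]; exact Set.mem_insert _ _))
  · exact absurd hab (hy.2.2 a' ha b' hb)
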